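/- Let f(n,k) be the number of intervals [v,w] in the middle order P_n with inv(w) − inv(v) = k. Then f(1,0) = 1 and for n ≥ 2, f(n,k) = Σ_{h=0}^{n−1} (n−h)·f(n−1, k−h), with f(n,j) = 0 for j < 0. -/
import Mathlib


/-- The inversion sequence of a permutation `w` of `Fin n` (0-indexed values):
`invSeq w i` counts the values `j < i` appearing after `i` in one-line notation. -/
def invSeq {n : ℕ} (w : Equiv.Perm (Fin n)) (i : Fin n) : ℕ :=
  (Finset.univ.filter (fun j : Fin n => j < i ∧ w.symm i < w.symm j)).card

/-- The middle order on permutations: coordinate-wise comparison of inversion sequences. -/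
def midLe {n : ℕ} (v w : Equiv.Perm (Fin n)) : Prop :=
  ∀ i, invSeq v i ≤ invSeq w i

/-- Number of inversions of a permutation. -/
def inversions {n : ℕ} (w : Equiv.Perm (Fin n)) : ℕ :=
  (Finset.univ.filter (fun p : Fin n × Fin n => p.1 < p.2 ∧ w p.2 < w p.1)).card

/-- `f n k` is the number of intervals of rank `k` in the middle order `P_n`
(with `f n k = 0` for `k < 0`). -/
noncomputable def f (n : ℕ) (k : ℤ) : ℕ :=
  Nat.card {p : Equiv.Perm (Fin n) × Equiv.Perm (Fin n) //
    midLe p.1 p.2 ∧ (inversions p.2 : ℤ) = (inversions p.1 : ℤ) + k}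

/-! ### Auxiliary material -/

open Equiv Finset

/-- Order-preserving deletion of the last slot of a permutation. -/
def del {n : ℕ} (σ : Equiv.Perm (Fin (n+1))) : Equiv.Perm (Fin n) :=
  (finSuccAboveEquiv (Fin.last n)).trans
    ((σ.subtypeEquiv (fun x => by
        constructor
        · exact fun h => fun hc => h (σ.injective hc)
        · exact fun h => fun hc => h (by rw [hc]))).trans
      (finSuccAboveEquiv (σ (Fin.last n))).symm)

lemma succAbove_del {n : ℕ} (σ : Equiv.Perm (Fin (n+1))) (j : Fin n) :
    (σ (Fin.last n)).succAbove (del σ j) = σ j.castSucc := by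
  have h1 : (finSuccAboveEquiv (σ (Fin.last n))) (del σ j) =
      ⟨σ j.castSucc, by
        intro hc
        exact (Fin.castSucc_lt_last j).ne (σ.injective hc)⟩ := by
    simp only [del, Equiv.trans_apply, finSuccAboveEquiv_apply, subtypeEquiv_apply,
      Fin.succAbove_last, Equiv.apply_symm_apply]
  have := congrArg Subtype.val h1
  simpa [finSuccAboveEquiv_apply] using this

lemma invSeq_last {n : ℕ} (w : Equiv.Perm (Fin (n+1))) :
    invSeq w (Fin.last n) = n - (w.symm (Fin.last n) : ℕ) := by
  classical
  unfold invSeq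
  have h1 : (Finset.univ.filter (fun j : Fin (n+1) => j < Fin.last n ∧
      w.symm (Fin.last n) < w.symm j)) =
      Finset.univ.filter (fun j => w.symm (Fin.last n) < w.symm j) := by
    apply Finset.filter_congr
    intro j _
    constructor
    · exact fun h => h.2
    · intro h
      refine ⟨?_, h⟩
      rcases Fin.lt_or_eq_of_le (Fin.le_last j) with h' | h'
      · exact h'
      · exact absurd (congrArg w.symm h') (ne_of_gt h)
  rw [h1]
  have h2 : (Finset.univ.filter (fun j : Fin (n+1) => w.symm (Fin.last n) < w.symm j)).card
      = (Finset.Ioi (w.symm (Fin.last n))).card := by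
    apply Finset.card_bij (fun j _ => w.symm j)
    · intro a ha; simp only [Finset.mem_filter] at ha; exact Finset.mem_Ioi.2 ha.2
    · intro a ha b hb h; exact w.symm.injective h
    · intro b hb; exact ⟨w b, by simp [Finset.mem_Ioi.1 hb], by simp⟩
  rw [h2, Fin.card_Ioi]
  simp

lemma inversions_eq_sum_invSeq {n : ℕ} (w : Equiv.Perm (Fin n)) :
    inversions w = ∑ i, invSeq w i := by
  classical
  unfold inversions invSeq
  have key : ∑ i : Fin n, (Finset.univ.filter
      (fun j : Fin n => j < i ∧ w.symm i < w.symm j)).card =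
      (Finset.univ.filter (fun p : Fin n × Fin n =>
        p.2 < p.1 ∧ w.symm p.1 < w.symm p.2)).card := by
    rw [Finset.card_eq_sum_card_fiberwise (f := Prod.fst) (t := Finset.univ)
      (fun x _ => Finset.mem_univ _)]
    apply Finset.sum_congr rfl
    intro i _
    apply Finset.card_bij (fun j _ => (i, j))
    · intro a ha
      simp only [Finset.mem_filter, Finset.mem_univ, true_and] at ha
      refine Finset.mem_filter.mpr ⟨Finset.mem_filter.mpr ⟨Finset.mem_univ _, ha⟩, rfl⟩
    · intro a _ b _ h
      exact congrArg Prod.snd h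
    · intro p hp
      simp only [Finset.mem_filter, Finset.mem_univ, true_and] at hp
      refine ⟨p.2, ?_, ?_⟩
      · simp only [Finset.mem_filter, Finset.mem_univ, true_and]
        rw [← hp.2]; exact hp.1
      · rw [← hp.2]
  rw [key]
  apply Finset.card_bij (fun p _ => (w p.1, w p.2))
  · intro p hp
    simp only [Finset.mem_filter, Finset.mem_univ, true_and] at hp ⊢
    refine ⟨hp.2, ?_⟩
    simpa using hp.1
  · intro a _ b _ h
    rw [Prod.ext_iff] at h ⊢
    exact ⟨w.injective h.1, w.injective h.2⟩
  · intro p hp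
    simp only [Finset.mem_filter, Finset.mem_univ, true_and] at hp
    refine ⟨(w.symm p.1, w.symm p.2), ?_, ?_⟩
    · simp only [Finset.mem_filter, Finset.mem_univ, true_and, Equiv.apply_symm_apply]
      exact ⟨hp.2, hp.1⟩
    · simp

lemma invSeq_castSucc {n : ℕ} (w : Equiv.Perm (Fin (n+1))) (j : Fin n) :
    invSeq w j.castSucc = invSeq (del w.symm).symm j := by
  classical
  unfold invSeq
  set σ := w.symm with hσ
  have hsymm : ((del w.symm).symm).symm = del σ := rfl
  rw [hsymm]
  refine Finset.card_bij' (fun (j' : Fin (n+1)) (h : j' ∈ _) =>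
      Fin.castPred j' (by
        simp only [Finset.mem_filter, Finset.mem_univ, true_and] at h
        exact Fin.ne_last_of_lt h.1))
    (fun (j'' : Fin n) _ => j''.castSucc) ?_ ?_ ?_ ?_
  · intro j' h
    simp only [Finset.mem_filter, Finset.mem_univ, true_and] at h ⊢
    obtain ⟨h1, h2⟩ := h
    have hne : j' ≠ Fin.last n := Fin.ne_last_of_lt h1
    refine ⟨?_, ?_⟩
    · rw [← Fin.castSucc_lt_castSucc_iff, Fin.castSucc_castPred]
      exact h1
    · rw [← Fin.succAbove_lt_succAbove_iff (p := σ (Fin.last n)), succAbove_del, succAbove_del,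
        Fin.castSucc_castPred]
      exact h2
  · intro j'' h
    simp only [Finset.mem_filter, Finset.mem_univ, true_and] at h ⊢
    obtain ⟨h1, h2⟩ := h
    refine ⟨?_, ?_⟩
    · exact Fin.castSucc_lt_castSucc_iff.mpr h1
    · rw [← succAbove_del σ, ← succAbove_del σ]
      exact (Fin.succAbove_lt_succAbove_iff (p := σ (Fin.last n))).mpr h2
  · intro j' h
    exact Fin.castSucc_castPred _ _
  · intro j'' h
    exact Fin.castPred_castSucc _

/-- Decomposition map: a permutation of `Fin (n+1)` gives the last letter of its
code together with a permutation of `Fin n`. -/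
def phi {n : ℕ} (w : Equiv.Perm (Fin (n+1))) : Fin (n+1) × Equiv.Perm (Fin n) :=
  (Fin.rev (w.symm (Fin.last n)), (del w.symm).symm)

lemma phi_injective {n : ℕ} : Function.Injective (phi (n := n)) := by
  intro w1 w2 h
  have h1 : w1.symm (Fin.last n) = w2.symm (Fin.last n) :=
    Fin.rev_injective (congrArg Prod.fst h)
  have h2 : del w1.symm = del w2.symm := by
    have := congrArg Prod.snd h
    simpa [phi] using congrArg Equiv.symm this
  have hsymm : w1.symm = w2.symm := by
    apply Equiv.ext
    intro i
    induction i using Fin.lastCases with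
    | last => exact h1
    | cast j =>
      have e1 := succAbove_del w1.symm j
      have e2 := succAbove_del w2.symm j
      rw [← e1, ← e2, h1, h2]
  calc w1 = w1.symm.symm := rfl
    _ = w2.symm.symm := by rw [hsymm]
    _ = w2 := rfl

lemma phi_bijective {n : ℕ} : Function.Bijective (phi (n := n)) := by
  rw [Fintype.bijective_iff_injective_and_card]
  refine ⟨phi_injective, ?_⟩
  simp [Fintype.card_perm, Fintype.card_prod, Nat.factorial_succ]

/-- The decomposition as an equivalence. -/
noncomputable def phiEquiv {n : ℕ} : Equiv.Perm (Fin (n+1)) ≃ Fin (n+1) × Equiv.Perm (Fin n) :=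
  Equiv.ofBijective phi phi_bijective

lemma phiEquiv_fst_val {n : ℕ} (w : Equiv.Perm (Fin (n+1))) :
    (((phiEquiv w).1 : Fin (n+1)) : ℕ) = invSeq w (Fin.last n) := by
  have : phiEquiv w = phi w := rfl
  rw [this, invSeq_last]
  simp [phi, Fin.val_rev]

lemma phiEquiv_snd_invSeq {n : ℕ} (w : Equiv.Perm (Fin (n+1))) (j : Fin n) :
    invSeq (phiEquiv w).2 j = invSeq w j.castSucc := by
  have : phiEquiv w = phi w := rfl
  rw [this]
  exact (invSeq_castSucc w j).symm

lemma phiEquiv_inversions {n : ℕ} (w : Equiv.Perm (Fin (n+1))) :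
    inversions w = inversions (phiEquiv w).2 + (((phiEquiv w).1 : Fin (n+1)) : ℕ) := by
  rw [inversions_eq_sum_invSeq w, inversions_eq_sum_invSeq ((phiEquiv w).2),
    Fin.sum_univ_castSucc, phiEquiv_fst_val]
  congr 1
  exact Finset.sum_congr rfl fun j _ => (phiEquiv_snd_invSeq w j).symm

lemma sum_triangle (m : ℕ) (F : ℕ → ℕ) :
    ∑ a ∈ Finset.range (m+1), ∑ b ∈ Finset.range (m+1), (if a ≤ b then F (b - a) else 0)
      = ∑ h ∈ Finset.range (m+1), (m+1-h) * F h := by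
  have h1 : ∀ a ∈ Finset.range (m+1),
      (∑ b ∈ Finset.range (m+1), if a ≤ b then F (b-a) else 0)
        = ∑ h ∈ Finset.range (m+1-a), F h := by
    intro a _
    rw [← Finset.sum_filter]
    have : (Finset.range (m+1)).filter (fun b => a ≤ b) = Finset.Ico a (m+1) := by
      ext b
      simp only [Finset.mem_filter, Finset.mem_range, Finset.mem_Ico]
      omega
    rw [this, Finset.sum_Ico_eq_sum_range]
    exact Finset.sum_congr rfl fun h _ => by rw [Nat.add_sub_cancel_left]
  rw [Finset.sum_congr rfl h1]
  rw [Finset.sum_comm' (s := Finset.range (m+1)) (t := fun a => Finset.range (m+1-a))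
    (t' := Finset.range (m+1)) (s' := fun h => Finset.range (m+1-h))
    (by intro a h; simp only [Finset.mem_range]; omega)]
  exact Finset.sum_congr rfl fun h _ => by
    rw [Finset.sum_const, Finset.card_range, smul_eq_mul]

lemma f_succ (m : ℕ) (k : ℤ) :
    f (m+1) k = ∑ h ∈ Finset.range (m+1), (m+1-h) * f m (k - (h : ℤ)) := by
  classical
  set C : (Fin (m+1) × Fin (m+1)) × (Equiv.Perm (Fin m) × Equiv.Perm (Fin m)) → Prop :=
    fun q => ((q.1.1 : ℕ) ≤ (q.1.2 : ℕ)) ∧ midLe q.2.1 q.2.2 ∧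
      (inversions q.2.2 : ℤ) + ((q.1.2 : ℕ) : ℤ)
        = (inversions q.2.1 : ℤ) + ((q.1.1 : ℕ) : ℤ) + k with hC
  have key : ∀ v w : Equiv.Perm (Fin (m+1)),
      (midLe v w ∧ (inversions w : ℤ) = (inversions v : ℤ) + k) ↔
      C (((phiEquiv v).1, (phiEquiv w).1), ((phiEquiv v).2, (phiEquiv w).2)) := by
    intro v w
    rw [hC]
    dsimp only
    have e1 := phiEquiv_inversions v
    have e2 := phiEquiv_inversions w
    constructor
    · rintro ⟨hm, he⟩
      refine ⟨?_, ?_, ?_⟩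
      · rw [phiEquiv_fst_val, phiEquiv_fst_val]; exact hm _
      · intro j
        rw [phiEquiv_snd_invSeq, phiEquiv_snd_invSeq]; exact hm _
      · omega
    · rintro ⟨h1, h2, h3⟩
      constructor
      · intro i
        induction i using Fin.lastCases with
        | last =>
          rw [← phiEquiv_fst_val, ← phiEquiv_fst_val]; exact h1
        | cast j =>
          rw [← phiEquiv_snd_invSeq, ← phiEquiv_snd_invSeq]; exact h2 j
      · omega
  have step1 : f (m+1) k = Nat.card {q // C q} := by
    apply Nat.card_congr
    exact Equiv.subtypeEquiv ((Equiv.prodCongr phiEquiv phiEquiv).trans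
      (Equiv.prodProdProdComm _ _ _ _)) (fun p => key p.1 p.2)
  have step2 : Nat.card {q // C q}
      = ∑ ab : Fin (m+1) × Fin (m+1),
          Nat.card {pr : Equiv.Perm (Fin m) × Equiv.Perm (Fin m) // C (ab, pr)} := by
    rw [Nat.card_congr (Equiv.subtypeProdEquivSigmaSubtype (fun ab pr => C (ab, pr)))]
    rw [Nat.card_eq_fintype_card, Fintype.card_sigma]
    exact Finset.sum_congr rfl fun ab _ => (Nat.card_eq_fintype_card).symm
  have step3 : ∀ a b : Fin (m+1),
      Nat.card {pr : Equiv.Perm (Fin m) × Equiv.Perm (Fin m) // C ((a, b), pr)}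
        = if (a : ℕ) ≤ (b : ℕ) then f m (k - (((b : ℕ) - (a : ℕ) : ℕ) : ℤ)) else 0 := by
    intro a b
    by_cases hab : (a : ℕ) ≤ (b : ℕ)
    · rw [if_pos hab]
      have : Nat.card {pr : Equiv.Perm (Fin m) × Equiv.Perm (Fin m) // C ((a, b), pr)}
          = Nat.card {pr : Equiv.Perm (Fin m) × Equiv.Perm (Fin m) //
              midLe pr.1 pr.2 ∧ (inversions pr.2 : ℤ)
                = (inversions pr.1 : ℤ) + (k - (((b : ℕ) - (a : ℕ) : ℕ) : ℤ))} := by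
        apply Nat.card_congr
        apply Equiv.subtypeEquivRight
        intro pr
        rw [hC]
        dsimp only
        constructor
        · rintro ⟨_, h2, h3⟩
          exact ⟨h2, by omega⟩
        · rintro ⟨h2, h3⟩
          exact ⟨hab, h2, by omega⟩
      rw [this]
      rfl
    · rw [if_neg hab]
      have : IsEmpty {pr : Equiv.Perm (Fin m) × Equiv.Perm (Fin m) // C ((a, b), pr)} :=
        ⟨fun x => hab x.2.1⟩
      exact Nat.card_of_isEmpty
  rw [step1, step2]
  have step4 : ∑ ab : Fin (m+1) × Fin (m+1),
      Nat.card {pr : Equiv.Perm (Fin m) × Equiv.Perm (Fin m) // C (ab, pr)}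
      = ∑ a ∈ Finset.range (m+1), ∑ b ∈ Finset.range (m+1),
          (if a ≤ b then f m (k - ((b - a : ℕ) : ℤ)) else 0) := by
    rw [Fintype.sum_prod_type]
    rw [← Fin.sum_univ_eq_sum_range (fun a => ∑ b ∈ Finset.range (m+1),
      (if a ≤ b then f m (k - ((b - a : ℕ) : ℤ)) else 0)) (m+1)]
    apply Finset.sum_congr rfl
    intro a _
    rw [← Fin.sum_univ_eq_sum_range (fun b => (if (a : ℕ) ≤ b then
      f m (k - ((b - (a : ℕ) : ℕ) : ℤ)) else 0)) (m+1)]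
    exact Finset.sum_congr rfl fun b _ => step3 a b
  rw [step4, sum_triangle m (fun h => f m (k - (h : ℤ)))]

theorem middle_order_intervals_by_rank :
    f 1 0 = 1 ∧
    ∀ n : ℕ, 2 ≤ n → ∀ k : ℤ,
      f n k = ∑ h ∈ Finset.range n, (n - h) * f (n - 1) (k - (h : ℤ)) := by
  constructor
  · have hsub : Subsingleton (Equiv.Perm (Fin 1)) :=
      ⟨fun a b => Equiv.ext fun x => Subsingleton.elim _ _⟩
    rw [f, Nat.card_eq_one_iff_unique]
    constructor
    · exact ⟨fun a b => Subtype.ext (by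
        have : Subsingleton (Equiv.Perm (Fin 1) × Equiv.Perm (Fin 1)) :=
          ⟨fun p q => Prod.ext (hsub.elim _ _) (hsub.elim _ _)⟩
        exact this.elim _ _)⟩
    · exact ⟨⟨(1, 1), fun i => le_rfl, by simp⟩⟩
  · intro n hn k
    obtain ⟨m, rfl⟩ : ∃ m, n = m + 1 := ⟨n - 1, by omega⟩
    simpa using f_succ m k
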